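/- Let R be a commutative ring, I ⊆ R an ideal, and f, g ∈ R with f a non-zero-divisor and gcd-type hypothesis (I·f : g) = (I : g)·f. Then (I·f : g)/(I·f) ≅ ((I : g)/I)(shifted), i.e., there is an R-module isomorphism (I·f : g)/(I·f) ≅ (I : g)/I given by division by f. -/

import Mathlib

/-- If `f` is a non-zero-divisor and `(I·f : g) = (I : g)·f`, then
`(I·f : g)/(I·f) ≅ (I : g)/I` as `R`-modules, the map being "division by `f`"
(it sends the class of `a·f`, for `a ∈ (I : g)`, to the class of `a`). -/
theorem stmt3 {R : Type*} [CommRing R] (I : Ideal R) (f g : R)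
    (hf : f ∈ nonZeroDivisors R)
    (hcolon : (I * Ideal.span {f}).colon (Ideal.span {g}) =
      I.colon (Ideal.span {g}) * Ideal.span {f}) :
    ∃ e : (Submodule.map (Submodule.mkQ (I * Ideal.span {f} : Ideal R))
            (((I * Ideal.span {f}).colon (Ideal.span {g}) : Ideal R) : Submodule R R)) ≃ₗ[R]
          (Submodule.map (Submodule.mkQ (I : Submodule R R))
            ((I.colon (Ideal.span {g}) : Ideal R) : Submodule R R)),
      ∀ (a : R), a ∈ I.colon (Ideal.span {g}) →
        ∀ x : (Submodule.map (Submodule.mkQ (I * Ideal.span {f} : Ideal R))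
            (((I * Ideal.span {f}).colon (Ideal.span {g}) : Ideal R) : Submodule R R)),
          (x : R ⧸ (I * Ideal.span {f} : Ideal R)) =
            Submodule.mkQ (I * Ideal.span {f} : Ideal R) (a * f) →
          ((e x : R ⧸ (I : Ideal R)) = Submodule.mkQ (I : Submodule R R) a) := by
  classical
  set J : Ideal R := I.colon (Ideal.span {g}) with hJ
  set P : Ideal R := (I * Ideal.span {f}).colon (Ideal.span {g}) with hPdef
  have hP : P = J * Ideal.span {f} := hcolon
  have hIJ : I ≤ J := by
    intro a ha
    rw [hJ, Ideal.mem_colon_span_singleton]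
    exact Ideal.mul_mem_right g I ha
  -- multiplication by f, as a map J → P
  have hmem : ∀ a : R, a ∈ J → a * f ∈ P := by
    intro a ha
    rw [hP]
    exact Ideal.mul_mem_mul ha (Ideal.mem_span_singleton_self f)
  let m : (J : Submodule R R) →ₗ[R] (P : Submodule R R) :=
    LinearMap.codRestrict (P : Submodule R R)
      ((LinearMap.mulRight R f).comp (Submodule.subtype (J : Submodule R R)))
      (fun a => hmem a a.2)
  have hm : ∀ a : (J : Submodule R R), ((m a : (P : Submodule R R)) : R) = (a : R) * f :=
    fun _ => rfl
  have hminj : Function.Injective m := by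
    intro a b hab
    have h : (a : R) * f = (b : R) * f := congrArg Subtype.val hab
    have h2 : ((a : R) - b) * f = 0 := by rw [sub_mul, h, sub_self]
    exact Subtype.ext (sub_eq_zero.mp (hf.2 _ h2))
  have hmsurj : Function.Surjective m := by
    rintro ⟨x, hx⟩
    rw [hP, Ideal.mem_mul_span_singleton] at hx
    obtain ⟨a, ha, rfl⟩ := hx
    exact ⟨⟨a, ha⟩, rfl⟩
  let e₀ : (J : Submodule R R) ≃ₗ[R] (P : Submodule R R) :=
    LinearEquiv.ofBijective m ⟨hminj, hmsurj⟩
  have he₀ : ∀ a : (J : Submodule R R), ((e₀ a : (P : Submodule R R)) : R) = (a : R) * f :=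
    fun a => rfl
  -- kernels
  set K₁ : Submodule R (P : Submodule R R) :=
    Submodule.comap (Submodule.subtype _) ((I * Ideal.span {f} : Ideal R) : Submodule R R)
    with hK₁
  set K₂ : Submodule R (J : Submodule R R) :=
    Submodule.comap (Submodule.subtype _) ((I : Ideal R) : Submodule R R) with hK₂
  have hmap : K₂.map (e₀ : (J : Submodule R R) →ₗ[R] (P : Submodule R R)) = K₁ := by
    ext x
    constructor
    · rintro ⟨a, ha, rfl⟩
      have haI : (a : R) ∈ I := ha
      show ((e₀ a : (P : Submodule R R)) : R) ∈ (I * Ideal.span {f} : Ideal R)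
      rw [he₀]
      exact Ideal.mul_mem_mul haI (Ideal.mem_span_singleton_self f)
    · intro hx
      have hx' : (x : R) ∈ (I * Ideal.span {f} : Ideal R) := hx
      rw [Ideal.mem_mul_span_singleton] at hx'
      obtain ⟨a, ha, hax⟩ := hx'
      refine ⟨⟨a, hIJ ha⟩, ha, ?_⟩
      exact Subtype.ext ((he₀ _).trans hax)
  -- the two quotient maps
  let qL : (P : Submodule R R) →ₗ[R] (R ⧸ (I * Ideal.span {f} : Ideal R)) :=
    (Submodule.mkQ (I * Ideal.span {f} : Ideal R)).comp (Submodule.subtype _)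
  let qR : (J : Submodule R R) →ₗ[R] (R ⧸ (I : Ideal R)) :=
    (Submodule.mkQ (I : Submodule R R)).comp (Submodule.subtype _)
  have hkerL : LinearMap.ker qL = K₁ := by
    rw [hK₁]
    show LinearMap.ker _ = _
    rw [LinearMap.ker_comp, Submodule.ker_mkQ]
  have hkerR : LinearMap.ker qR = K₂ := by
    rw [hK₂]
    show LinearMap.ker _ = _
    rw [LinearMap.ker_comp, Submodule.ker_mkQ]
  have hrangeL : LinearMap.range qL =
      Submodule.map (Submodule.mkQ (I * Ideal.span {f} : Ideal R)) (P : Submodule R R) := by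
    show LinearMap.range _ = _
    rw [LinearMap.range_comp, Submodule.range_subtype]
  have hrangeR : LinearMap.range qR =
      Submodule.map (Submodule.mkQ (I : Submodule R R)) (J : Submodule R R) := by
    show LinearMap.range _ = _
    rw [LinearMap.range_comp, Submodule.range_subtype]
  let eq₂ : ((J : Submodule R R) ⧸ K₂) ≃ₗ[R] ((P : Submodule R R) ⧸ K₁) :=
    Submodule.Quotient.equiv K₂ K₁ e₀ hmap
  let e : (Submodule.map (Submodule.mkQ (I * Ideal.span {f} : Ideal R)) (P : Submodule R R))
      ≃ₗ[R] (Submodule.map (Submodule.mkQ (I : Submodule R R)) (J : Submodule R R)) :=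
    (LinearEquiv.ofEq _ _ hrangeL.symm).trans <|
      qL.quotKerEquivRange.symm.trans <|
        (Submodule.quotEquivOfEq _ _ hkerL).trans <|
          eq₂.symm.trans <|
            (Submodule.quotEquivOfEq _ _ hkerR.symm).trans <|
              qR.quotKerEquivRange.trans (LinearEquiv.ofEq _ _ hrangeR)
  refine ⟨e, ?_⟩
  intro a ha x hx
  -- step 1: the first two pieces send x to the class of ⟨a*f, _⟩ in P ⧸ ker qL
  have hafP : a * f ∈ P := hmem a ha
  have h1 : qL.quotKerEquivRange.symm ((LinearEquiv.ofEq _ _ hrangeL.symm) x) =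
      Submodule.Quotient.mk (⟨a * f, hafP⟩ : (P : Submodule R R)) := by
    rw [LinearEquiv.symm_apply_eq]
    apply Subtype.ext
    rw [LinearMap.quotKerEquivRange_apply_mk]
    exact hx
  -- step 2: e₀.symm of ⟨a*f, _⟩ is ⟨a, _⟩
  have h2 : e₀.symm ⟨a * f, hafP⟩ = ⟨a, ha⟩ := by
    rw [LinearEquiv.symm_apply_eq]
    exact Subtype.ext (he₀ ⟨a, ha⟩)
  show ((((LinearEquiv.ofEq _ _ hrangeR) (qR.quotKerEquivRange
      ((Submodule.quotEquivOfEq _ _ hkerR.symm) (eq₂.symm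
      ((Submodule.quotEquivOfEq _ _ hkerL)
      (qL.quotKerEquivRange.symm ((LinearEquiv.ofEq _ _ hrangeL.symm) x))))))) :
      (Submodule.map (Submodule.mkQ (I : Submodule R R)) (J : Submodule R R))) : R ⧸ (I : Ideal R))
      = Submodule.mkQ (I : Submodule R R) a
  rw [h1, Submodule.quotEquivOfEq_mk]
  have h3 : eq₂.symm (Submodule.Quotient.mk (⟨a * f, hafP⟩ : (P : Submodule R R))) =
      Submodule.Quotient.mk (⟨a, ha⟩ : (J : Submodule R R)) := by
    rw [LinearEquiv.symm_apply_eq]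
    have he : e₀ ⟨a, ha⟩ = ⟨a * f, hafP⟩ := Subtype.ext (he₀ ⟨a, ha⟩)
    calc Submodule.Quotient.mk (⟨a * f, hafP⟩ : (P : Submodule R R))
        = Submodule.Quotient.mk (e₀ ⟨a, ha⟩) := by rw [he]
      _ = eq₂ (Submodule.Quotient.mk (⟨a, ha⟩ : (J : Submodule R R))) := by
          simp only [eq₂, Submodule.Quotient.equiv_apply, Submodule.mapQ_apply,
            LinearEquiv.coe_coe]
  rw [h3, Submodule.quotEquivOfEq_mk]
  rfl
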